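/- Let Γ be a finite connected graph with a nondegenerate length function λ (λ(e) > 0 for all half-edges), and let ω be a balanced 1-cocycle with λ_*(ω) = 0 on H₁(Γ). Define f: Γ₀ → V by f(v₀) = 0 at a base vertex and f(τe) = f(σe) + 2λ(e)ω(e). Then f is well-defined and f ≡ 0, hence ω = 0. -/

import Mathlib

open Finset

/-- A finite graph: vertices, half-edges with a free involution, and a target map. -/
structure FinGraph where
  V : Type
  H : Type
  [fV : Fintype V]
  [fH : Fintype H]
  [dV : DecidableEq V]
  [dH : DecidableEq H]
  bar : H → H
  bar_invol : ∀ e, bar (bar e) = e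
  bar_ne : ∀ e, bar e ≠ e
  tar : H → V

attribute [instance] FinGraph.fV FinGraph.fH FinGraph.dV FinGraph.dH

namespace FinGraph

variable (G : FinGraph)

/-- The source of a half-edge is the target of its other half. -/
def src (e : G.H) : G.V := G.tar (G.bar e)

/-- One step along a half-edge belonging to the allowed set `A`. -/
def Step (A : Set G.H) (v w : G.V) : Prop := ∃ e, e ∈ A ∧ G.src e = v ∧ G.tar e = w

/-- Reachability using only half-edges in `A`. -/
def ReachIn (A : Set G.H) (v w : G.V) : Prop := Relation.ReflTransGen (G.Step A) v w

/-- The graph is connected. -/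
def Connected : Prop := ∀ v w : G.V, G.ReachIn Set.univ v w

/-- The valence of a vertex: the number of half-edges incident to it. -/
def valence (v : G.V) : ℕ := (univ.filter (fun e => G.tar e = v)).card

/-- An edge `{e, ē}` is separating if deleting it disconnects the graph. -/
def IsSeparating (e : G.H) : Prop :=
  ¬ ∀ v w : G.V, G.ReachIn {h | h ≠ e ∧ h ≠ G.bar e} v w

/-- The graph has first Betti number (rank) `n`; for a connected graph this
says `#edges = #vertices + n - 1`, i.e. `#H + 2 = 2(#V + n)`. -/
def HasRank (n : ℕ) : Prop := Fintype.card G.H + 2 = 2 * (Fintype.card G.V + n)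

end FinGraph

namespace FinGraph

variable (G : FinGraph)

/-- A balanced 1-cocycle with values in an additive group. -/
def IsBalanced {W : Type*} [AddCommGroup W] (ω : G.H → W) : Prop :=
  (∀ e, ω (G.bar e) = - ω e) ∧
  ∀ v : G.V, ∑ e ∈ univ.filter (fun e => G.tar e = v), ω e = 0

/-- The space `Ω¹(Γ, V)` of balanced `V`-valued 1-cocycles. -/
def Omega (W : Type*) [AddCommGroup W] [Module ℝ W] : Submodule ℝ (G.H → W) where
  carrier := {ω | G.IsBalanced ω}
  zero_mem' := ⟨fun e => by simp, fun v => by simp⟩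
  add_mem' := by
    intro a b ha hb
    refine ⟨fun e => ?_, fun v => ?_⟩
    · simp only [Pi.add_apply, ha.1 e, hb.1 e]; abel
    · simp only [Pi.add_apply, Finset.sum_add_distrib, ha.2 v, hb.2 v, add_zero]
  smul_mem' := by
    intro r a ha
    refine ⟨fun e => ?_, fun v => ?_⟩
    · simp only [Pi.smul_apply, ha.1 e, smul_neg]
    · simp only [Pi.smul_apply, ← Finset.smul_sum, ha.2 v, smul_zero]

/-- The group of 1-cycles (the model for `H₁(Γ)`): antisymmetric integer functions
on half-edges with vanishing vertex sums. -/
def cycles : AddSubgroup (G.H → ℤ) where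
  carrier := {c | G.IsBalanced c}
  zero_mem' := ⟨fun e => by simp, fun v => by simp⟩
  add_mem' := by
    intro a b ha hb
    refine ⟨fun e => ?_, fun v => ?_⟩
    · simp only [Pi.add_apply, ha.1 e, hb.1 e]; abel
    · simp only [Pi.add_apply, Finset.sum_add_distrib, ha.2 v, hb.2 v, add_zero]
  neg_mem' := by
    intro a ha
    refine ⟨fun e => ?_, fun v => ?_⟩
    · simp only [Pi.neg_apply, ha.1 e]
    · simp only [Pi.neg_apply, Finset.sum_neg_distrib, ha.2 v, neg_zero]

/-- A spanning (maximal) tree, given as a `bar`-closed set of half-edges. -/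
def IsSpanningTree (S : Finset G.H) : Prop :=
  (∀ e ∈ S, G.bar e ∈ S) ∧ (∀ v w : G.V, G.ReachIn ↑S v w) ∧
    S.card + 2 = 2 * Fintype.card G.V

/-- `es` is a choice of one half-edge from each of the `r` edges not in `S`. -/
def IsComplement (S : Finset G.H) {r : ℕ} (es : Fin r → G.H) : Prop :=
  (∀ i, es i ∉ S) ∧ ∀ e ∉ S, ∃! i, e = es i ∨ e = G.bar (es i)

/-- `ω` is nonsingular: its values span an `r`-dimensional subspace. -/
def Nonsingular {W : Type*} [AddCommGroup W] [Module ℝ W] (ω : G.H → W) (r : ℕ) : Prop :=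
  Module.finrank ℝ ↥(Submodule.span ℝ (Set.range ω)) = r

/-- A length function on the graph. -/
def IsLengthFunction (lam : G.H → ℝ) : Prop :=
  (∀ e, 0 ≤ lam e ∧ lam e ≤ 1/2) ∧ (∀ e, lam (G.bar e) = lam e) ∧
    ∀ c ∈ G.cycles, c ≠ 0 → ∃ e, c e ≠ 0 ∧ lam e = 1/2

end FinGraph


namespace FinGraph

/-- Walks in a graph, recorded as sequences of half-edges. -/
inductive GWalk (G : FinGraph) : G.V → G.V → Type
  | nil (v : G.V) : GWalk G v v
  | cons (e : G.H) {w : G.V} (p : GWalk G (G.tar e) w) : GWalk G (G.src e) w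

namespace GWalk

variable {G : FinGraph}

/-- The weighted sum of `(2 λ e) • ω e` along a walk. -/
def gsum {W : Type} [AddCommGroup W] [Module ℝ W] (lam : G.H → ℝ) (ω : G.H → W) :
    ∀ {u w : G.V}, GWalk G u w → W
  | _, _, nil _ => 0
  | _, _, cons e p => (2 * lam e) • ω e + gsum lam ω p

/-- The integer chain associated to a walk. -/
def chain : ∀ {u w : G.V}, GWalk G u w → G.H → ℤ
  | _, _, nil _ => 0
  | _, _, cons e p =>
      (fun h => (if h = e then 1 else 0) - (if h = G.bar e then 1 else 0)) + chain p

def append : ∀ {u w x : G.V}, GWalk G u w → GWalk G w x → GWalk G u x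
  | _, _, _, nil _, q => q
  | _, _, _, cons e p, q => cons e (p.append q)

lemma gsum_append {W : Type} [AddCommGroup W] [Module ℝ W] (lam : G.H → ℝ) (ω : G.H → W)
    {u w x : G.V} (p : GWalk G u w) (q : GWalk G w x) :
    (p.append q).gsum lam ω = p.gsum lam ω + q.gsum lam ω := by
  induction p with
  | nil v => simp [append, gsum]
  | cons e p ih => simp [append, gsum, ih, add_assoc]

lemma bar_eq_iff {e h : G.H} : G.bar h = e ↔ h = G.bar e :=
  ⟨fun H => by rw [← H, G.bar_invol], fun H => by rw [H, G.bar_invol]⟩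

lemma chain_bar {u w : G.V} (p : GWalk G u w) (h : G.H) :
    chain p (G.bar h) = - chain p h := by
  induction p with
  | nil v => simp [chain]
  | cons e p ih =>
    simp only [chain, Pi.add_apply, ih]
    have h1 : (G.bar h = e) ↔ (h = G.bar e) := bar_eq_iff
    have h2 : (G.bar h = G.bar e) ↔ (h = e) := by
      constructor
      · intro H; have := congrArg G.bar H; rwa [G.bar_invol, G.bar_invol] at this
      · intro H; rw [H]
    rw [if_congr h1 rfl rfl, if_congr h2 rfl rfl]
    ring

lemma chain_vertexSum {u w : G.V} (p : GWalk G u w) (v : G.V) :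
    ∑ h ∈ univ.filter (fun h => G.tar h = v), chain p h
      = (if w = v then 1 else 0) - (if u = v then 1 else 0) := by
  induction p with
  | nil u => simp [chain]
  | cons e p ih =>
    simp only [chain, Pi.add_apply, Finset.sum_add_distrib, Finset.sum_sub_distrib, ih]
    rw [Finset.sum_ite_eq' _ e (fun _ => (1 : ℤ)),
        Finset.sum_ite_eq' _ (G.bar e) (fun _ => (1 : ℤ))]
    simp only [Finset.mem_filter, Finset.mem_univ, true_and]
    have hsrc : G.tar (G.bar e) = G.src e := rfl
    rw [hsrc]
    split_ifs <;> ring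

lemma chain_weight {W : Type} [AddCommGroup W] [Module ℝ W] (lam : G.H → ℝ) (ω : G.H → W)
    (hbar : ∀ e, lam (G.bar e) = lam e) (hωbar : ∀ e, ω (G.bar e) = - ω e)
    {u w : G.V} (p : GWalk G u w) :
    ∑ h : G.H, ((chain p h : ℝ) * lam h) • ω h = p.gsum lam ω := by
  induction p with
  | nil v => simp [chain, gsum]
  | cons e p ih =>
    have hterm : ∀ h : G.H, ((chain (cons e p) h : ℝ) * lam h) • ω h
        = ((if h = e then lam h • ω h else 0) - (if h = G.bar e then lam h • ω h else 0))
          + ((chain p h : ℝ) * lam h) • ω h := by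
      intro h
      simp only [chain, Pi.add_apply]
      push_cast
      rw [add_mul, add_smul, sub_mul, sub_smul]
      congr 1
      congr 1 <;> (split_ifs <;> simp)
    rw [Finset.sum_congr rfl (fun h _ => hterm h)]
    rw [Finset.sum_add_distrib, Finset.sum_sub_distrib, ih,
        Finset.sum_ite_eq' _ e (fun h => lam h • ω h),
        Finset.sum_ite_eq' _ (G.bar e) (fun h => lam h • ω h)]
    simp only [Finset.mem_univ, if_true, hbar, hωbar, smul_neg, sub_neg_eq_add]
    show lam e • ω e + lam e • ω e + _ = gsum lam ω (cons e p)
    rw [← add_smul]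
    show _ = (2 * lam e) • ω e + gsum lam ω p
    rw [two_mul]

lemma gsum_eq_of_same_ends {W : Type} [AddCommGroup W] [Module ℝ W]
    (lam : G.H → ℝ) (ω : G.H → W)
    (hbar : ∀ e, lam (G.bar e) = lam e) (hωbar : ∀ e, ω (G.bar e) = - ω e)
    (hker : ∀ c ∈ G.cycles, ∑ e : G.H, ((c e : ℝ) * lam e) • ω e = 0)
    {u w : G.V} (p q : GWalk G u w) : p.gsum lam ω = q.gsum lam ω := by
  have hc : (chain p - chain q) ∈ G.cycles := by
    refine ⟨fun e => ?_, fun v => ?_⟩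
    · simp only [Pi.sub_apply, chain_bar]; ring
    · simp only [Pi.sub_apply, Finset.sum_sub_distrib, chain_vertexSum, sub_self]
  have h0 := hker _ hc
  have hterm : ∀ h : G.H, (((chain p - chain q) h : ℝ) * lam h) • ω h
      = ((chain p h : ℝ) * lam h) • ω h - ((chain q h : ℝ) * lam h) • ω h := by
    intro h
    simp only [Pi.sub_apply]
    push_cast
    rw [sub_mul, sub_smul]
  rw [Finset.sum_congr rfl (fun h _ => hterm h), Finset.sum_sub_distrib,
      chain_weight lam ω hbar hωbar p, chain_weight lam ω hbar hωbar q] at h0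
  exact sub_eq_zero.mp h0

lemma walk_exists (hconn : G.Connected) (v₀ v : G.V) : Nonempty (GWalk G v₀ v) := by
  have h := hconn v₀ v
  induction h with
  | refl => exact ⟨nil v₀⟩
  | tail hab hbc ih =>
    obtain ⟨p⟩ := ih
    obtain ⟨e, -, hsrc, htar⟩ := hbc
    subst hsrc; subst htar
    exact ⟨p.append (cons e (nil _))⟩

end GWalk

end FinGraph

/-- the maximum principle. If `λ` is nondegenerate and `λ_*(ω) = 0`
on `H₁(Γ)`, then the potential function `f` with `f(v₀) = 0` and
`f(τe) = f(σe) + 2λ(e)ω(e)` is well-defined (exists), is identically zero, and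
hence `ω = 0`. -/
theorem lambdaStar_injective_maximum_principle (G : FinGraph) (hconn : G.Connected)
    (W : Type) [NormedAddCommGroup W] [InnerProductSpace ℝ W]
    (lam : G.H → ℝ) (hpos : ∀ e, 0 < lam e ∧ lam e ≤ 1/2)
    (hbar : ∀ e, lam (G.bar e) = lam e)
    (ω : G.H → W) (hω : ω ∈ G.Omega W)
    (hker : ∀ c ∈ G.cycles, ∑ e : G.H, ((c e : ℝ) * lam e) • ω e = 0)
    (v₀ : G.V) :
    (∃ f : G.V → W, f v₀ = 0 ∧
        ∀ e : G.H, f (G.tar e) = f (G.src e) + (2 * lam e) • ω e) ∧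
      (∀ f : G.V → W, (f v₀ = 0 ∧
          ∀ e : G.H, f (G.tar e) = f (G.src e) + (2 * lam e) • ω e) → f = 0) ∧
      ω = 0 := by
  classical
  obtain ⟨hωbar, hωsum⟩ := hω
  -- Uniqueness (maximum principle)
  have huniq : ∀ f : G.V → W, (f v₀ = 0 ∧
      ∀ e : G.H, f (G.tar e) = f (G.src e) + (2 * lam e) • ω e) → f = 0 := by
    rintro f ⟨hf0, hfe⟩
    obtain ⟨vm, -, hvm⟩ := Finset.exists_max_image (univ : Finset G.V)
      (fun v => ‖f v‖) ⟨v₀, mem_univ v₀⟩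
    have key : ∀ v : G.V, (∀ w, ‖f w‖ ≤ ‖f v‖) → ∀ e, G.tar e = v →
        f (G.src e) = f v := by
      intro v hmax e he
      set S := univ.filter (fun h => G.tar h = v) with hS
      have hωe : ∀ h ∈ S, ω h = (2 * lam h)⁻¹ • (f v - f (G.src h)) := by
        intro h hh
        have hfh := hfe h
        rw [(mem_filter.mp hh).2] at hfh
        have hl : (2 * lam h) ≠ 0 := by have := (hpos h).1; positivity
        rw [hfh, add_sub_cancel_left, smul_smul, inv_mul_cancel₀ hl, one_smul]
      have hsum : ∑ h ∈ S, (2 * lam h)⁻¹ * (‖f v‖ ^ 2 - inner ℝ (f v) (f (G.src h))) = 0 := by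
        have hz : (inner ℝ (f v) (∑ h ∈ S, ω h) : ℝ) = 0 := by
          rw [hωsum v, inner_zero_right]
        rw [inner_sum] at hz
        rw [← hz]
        refine Finset.sum_congr rfl fun h hh => ?_
        rw [hωe h hh, real_inner_smul_right, inner_sub_right, real_inner_self_eq_norm_sq]
      have hnonneg : ∀ h ∈ S,
          0 ≤ (2 * lam h)⁻¹ * (‖f v‖ ^ 2 - inner ℝ (f v) (f (G.src h))) := by
        intro h hh
        have hl : (0:ℝ) < 2 * lam h := by have := (hpos h).1; linarith
        apply mul_nonneg (le_of_lt (inv_pos.mpr hl))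
        have h1 : (inner ℝ (f v) (f (G.src h)) : ℝ) ≤ ‖f v‖ * ‖f (G.src h)‖ :=
          real_inner_le_norm _ _
        have h2 : ‖f (G.src h)‖ ≤ ‖f v‖ := hmax _
        nlinarith [norm_nonneg (f v)]
      have hall := (Finset.sum_eq_zero_iff_of_nonneg hnonneg).mp hsum
      have heS : e ∈ S := mem_filter.mpr ⟨mem_univ e, he⟩
      have h0 := hall e heS
      have hl : (0:ℝ) < 2 * lam e := by have := (hpos e).1; linarith
      have h1 : (inner ℝ (f v) (f (G.src e)) : ℝ) = ‖f v‖ ^ 2 := by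
        rcases mul_eq_zero.mp h0 with h | h
        · exact absurd h (by positivity)
        · linarith [sub_eq_zero.mp h]
      have h3 : ‖f (G.src e)‖ ≤ ‖f v‖ := hmax _
      have h2 : ‖f v - f (G.src e)‖ ^ 2 ≤ 0 := by
        rw [@norm_sub_sq_real, h1]
        have h5 := mul_self_le_mul_self (norm_nonneg (f (G.src e))) h3
        nlinarith [norm_nonneg (f v)]
      have h4 : ‖f v - f (G.src e)‖ = 0 := by
        nlinarith [norm_nonneg (f v - f (G.src e))]
      exact (sub_eq_zero.mp (norm_eq_zero.mp h4)).symm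
    have reach : ∀ a b : G.V, G.ReachIn Set.univ a b →
        (∀ w, ‖f w‖ ≤ ‖f b‖) → f a = f b := by
      intro a b h
      induction h with
      | refl => intro _; rfl
      | tail hab hbc ih =>
        intro hmax
        obtain ⟨e, -, hsrc, htar⟩ := hbc
        have h1 := key _ hmax e htar
        rw [hsrc] at h1
        rw [← h1] at hmax ⊢
        exact ih hmax
    have hm := reach v₀ vm (hconn v₀ vm) (fun w => hvm w (mem_univ w))
    funext w
    have hw : ‖f w‖ ≤ ‖f vm‖ := hvm w (mem_univ w)
    rw [← hm, hf0, norm_zero] at hw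
    simpa using norm_le_zero_iff.mp hw
  -- Existence
  have hwalk : ∀ v, Nonempty (FinGraph.GWalk G v₀ v) :=
    fun v => FinGraph.GWalk.walk_exists hconn v₀ v
  have hPI : ∀ {u w : G.V} (p q : FinGraph.GWalk G u w), p.gsum lam ω = q.gsum lam ω :=
    fun p q => FinGraph.GWalk.gsum_eq_of_same_ends lam ω hbar hωbar hker p q
  set f : G.V → W := fun v => ((hwalk v).some).gsum lam ω with hfdef
  have hf0 : f v₀ = 0 := by
    have := hPI ((hwalk v₀).some) (FinGraph.GWalk.nil v₀)
    simpa [hfdef, FinGraph.GWalk.gsum] using this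
  have hfe : ∀ e : G.H, f (G.tar e) = f (G.src e) + (2 * lam e) • ω e := by
    intro e
    have := hPI (w := G.tar e) ((hwalk (G.tar e)).some)
      (((hwalk (G.src e)).some).append (FinGraph.GWalk.cons e (FinGraph.GWalk.nil _)))
    rw [FinGraph.GWalk.gsum_append] at this
    simp only [FinGraph.GWalk.gsum, add_zero] at this
    simpa [hfdef, add_comm] using this
  refine ⟨⟨f, hf0, hfe⟩, huniq, ?_⟩
  have hfz : f = 0 := huniq f ⟨hf0, hfe⟩
  funext e
  have := hfe e
  rw [hfz] at this
  simp only [Pi.zero_apply, zero_add] at this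
  have hl : (2 * lam e) ≠ 0 := by have := (hpos e).1; positivity
  rcases smul_eq_zero.mp this.symm with h | h
  · exact absurd h hl
  · exact h
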